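/- The Banach space c_0 of real sequences converging to 0, with the supremum norm, regarded as an additive topological group, is NSS but not strongly NSS. Specifically: (a) for every x ∈ c_0 with x ≠ 0, the norms ‖n·x‖ tend to +∞, so every open ball around 0 contains no non-trivial subgroup; (b) for every r > 0 the open ball {x : ‖x‖ < r} is not an unenclosed set, as witnessed by the sequence ((r/2)·e_n) of scaled canonical basis vectors. -/

import Mathlib

open Filter Topology ZeroAtInfty

/-- The canonical basis vector `e n` of `c₀ = C₀(ℕ, ℝ)`. -/
noncomputable def eVec (n : ℕ) : C₀(ℕ, ℝ) :=
  { toFun := fun m => if m = n then (1 : ℝ) else 0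
    continuous_toFun := continuous_of_discreteTopology
    zero_at_infty' := by
      have h : (fun m : ℕ => if m = n then (1:ℝ) else 0) =ᶠ[Filter.cocompact ℕ] 0 := by
        apply Filter.mem_of_superset (isCompact_singleton (x := n)).compl_mem_cocompact
        intro m hm
        simp only [Set.mem_compl_iff, Set.mem_singleton_iff] at hm
        simp [hm]
      rw [Filter.tendsto_congr' h]
      exact tendsto_const_nhds }

lemma myNorm_le_of_forall {f : C₀(ℕ, ℝ)} {C : ℝ} (hC : 0 ≤ C) (h : ∀ m, |f m| ≤ C) :
    ‖f‖ ≤ C := by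
  rw [← ZeroAtInftyContinuousMap.norm_toBCF_eq_norm]
  exact (BoundedContinuousFunction.norm_le hC).2 h

lemma myLe_norm (f : C₀(ℕ, ℝ)) (m : ℕ) : |f m| ≤ ‖f‖ := by
  rw [← ZeroAtInftyContinuousMap.norm_toBCF_eq_norm]
  exact BoundedContinuousFunction.norm_coe_le_norm f.toBCF m

lemma myNorm_eVec (n : ℕ) : ‖eVec n‖ = 1 := by
  apply le_antisymm
  · exact myNorm_le_of_forall zero_le_one fun m => by by_cases h : m = n <;> simp [eVec, h]
  · simpa [eVec] using myLe_norm (eVec n) n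

lemma myNorm_smul (c : ℝ) (f : C₀(ℕ, ℝ)) : ‖c • f‖ = |c| * ‖f‖ := by
  rw [← ZeroAtInftyContinuousMap.norm_toBCF_eq_norm,
    ← ZeroAtInftyContinuousMap.norm_toBCF_eq_norm]
  have h : (c • f).toBCF = c • f.toBCF := rfl
  rw [h, norm_smul]; simp

lemma myCoe_sum {ι : Type*} (s : Finset ι) (g : ι → C₀(ℕ, ℝ)) (m : ℕ) :
    (∑ i ∈ s, g i) m = ∑ i ∈ s, g i m := by
  classical
  induction s using Finset.induction with
  | empty => simp
  | insert _ _ h ih => simp_all [Finset.sum_insert h]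

/-- `c₀` is NSS but not strongly NSS: (a) for every `x ≠ 0` we have `‖n • x‖ → ∞`,
so every open ball around `0` contains no non-trivial subgroup; (b) for every `r > 0`
the ball `{x : ‖x‖ < r}` is not an unenclosed set, witnessed by `((r/2) • e n)`:
this sequence does not converge to `0`, yet each finite sum of its terms over
increasing indices stays in the ball. -/
theorem stmt_6 :
    (∀ x : C₀(ℕ, ℝ), x ≠ 0 → Tendsto (fun n : ℕ => ‖n • x‖) atTop atTop) ∧
    (∀ r : ℝ, 0 < r → ∀ K : AddSubgroup C₀(ℕ, ℝ),
      (K : Set C₀(ℕ, ℝ)) ⊆ {x | ‖x‖ < r} → K = ⊥) ∧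
    (∀ r : ℝ, 0 < r →
      ¬ Tendsto (fun n : ℕ => (r / 2) • eVec n) atTop (𝓝 0) ∧
      ∀ (k : ℕ) (n : Fin (k + 1) → ℕ), StrictMono n →
        ‖∑ i : Fin (k + 1), (r / 2) • eVec (n i)‖ < r) := by
  have key : ∀ x : C₀(ℕ, ℝ), x ≠ 0 → Tendsto (fun n : ℕ => ‖n • x‖) atTop atTop := by
    intro x hx
    have hx' : 0 < ‖x‖ := norm_pos_iff.2 hx
    have : (fun n : ℕ => ‖n • x‖) = fun n : ℕ => (n : ℝ) * ‖x‖ := by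
      funext n
      rw [← Nat.cast_smul_eq_nsmul ℝ, norm_smul]
      simp
    rw [this]
    exact (tendsto_natCast_atTop_atTop (R := ℝ)).atTop_mul_const hx'
  refine ⟨key, ?_, ?_⟩
  · intro r hr K hK
    refine (AddSubgroup.eq_bot_iff_forall K).2 fun x hx => ?_
    by_contra hne
    obtain ⟨n, hn⟩ := ((key x hne).eventually_ge_atTop r).exists
    exact absurd (hK (K.nsmul_mem hx n)) (by simpa using not_lt.2 hn)
  · intro r hr
    constructor
    · intro h
      have h2 : Tendsto (fun n : ℕ => ‖(r / 2) • eVec n‖) atTop (𝓝 0) := by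
        simpa [Function.comp_def] using (continuous_norm.tendsto 0).comp h
      have heq : (fun n : ℕ => ‖(r / 2) • eVec n‖) = fun _ => r / 2 := by
        funext n
        rw [myNorm_smul, myNorm_eVec, mul_one,
          abs_of_pos (by linarith : (0:ℝ) < r / 2)]
      rw [heq] at h2
      have := tendsto_nhds_unique h2 tendsto_const_nhds
      linarith
    · intro k n hn
      have hinj := hn.injective
      have hbound : ‖∑ i : Fin (k + 1), (r / 2) • eVec (n i)‖ ≤ r / 2 := by
        apply myNorm_le_of_forall (by linarith)
        intro m
        have hcoe : (∑ i : Fin (k + 1), (r / 2) • eVec (n i)) m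
            = ∑ i : Fin (k + 1), (r / 2) * (if m = n i then (1:ℝ) else 0) := by
          rw [myCoe_sum]
          simp [eVec]
        rw [hcoe]
        by_cases hm : ∃ i, m = n i
        · obtain ⟨i, hi⟩ := hm
          rw [Finset.sum_eq_single i]
          · rw [hi, if_pos rfl, mul_one, abs_of_pos (by linarith : (0:ℝ) < r / 2)]
          · intro j _ hj
            have : m ≠ n j := by
              rw [hi]; exact fun h => hj (hinj h.symm)
            simp [this]
          · simp
        · push_neg at hm
          rw [Finset.sum_eq_zero (fun j _ => by simp [hm j])]
          simp; linarith
      linarith
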